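/- Let h(t) = (1/2)(1−t)² log((1−t)²) + (1/2)(1+t)² log((1+t)²) − (1+t²) log(1+t²). Then for every t ∈ [0,1), h'(t) ≥ h(t) ≥ 0, where h'(t) = 2((1+t) log(1+t) − (1−t) log(1−t) − t log(1+t²)) is the derivative of h. -/

import Mathlib

/-- `h(t) = (1/2)(1−t)² log((1−t)²) + (1/2)(1+t)² log((1+t)²) − (1+t²) log(1+t²)`
(note `Real.log 0 = 0`). -/
noncomputable def hFun (t : ℝ) : ℝ :=
  (1 / 2) * (1 - t) ^ 2 * Real.log ((1 - t) ^ 2) +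
    (1 / 2) * (1 + t) ^ 2 * Real.log ((1 + t) ^ 2) -
    (1 + t ^ 2) * Real.log (1 + t ^ 2)

/-- The derivative of `h`:
`h'(t) = 2((1+t) log(1+t) − (1−t) log(1−t) − t log(1+t²))`. -/
noncomputable def hFun' (t : ℝ) : ℝ :=
  2 * ((1 + t) * Real.log (1 + t) - (1 - t) * Real.log (1 - t) -
    t * Real.log (1 + t ^ 2))

/-- The second derivative of `h`: `h''(t) = 4/(1+t²) − 2 log((1+t²)/(1−t²))`. -/
noncomputable def hFun'' (t : ℝ) : ℝ :=
  4 / (1 + t ^ 2) - 2 * Real.log ((1 + t ^ 2) / (1 - t ^ 2))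

lemma hFun_eq (t : ℝ) :
    hFun t = (1 - t) ^ 2 * Real.log (1 - t) + (1 + t) ^ 2 * Real.log (1 + t)
      - (1 + t ^ 2) * Real.log (1 + t ^ 2) := by
  simp only [hFun, Real.log_pow]
  push_cast
  ring

lemma hFun_hasDerivAt {t : ℝ} (h1 : -1 < t) (h2 : t < 1) :
    HasDerivAt hFun (hFun' t) t := by
  have ht1 : (0:ℝ) < 1 - t := by linarith
  have ht2 : (0:ℝ) < 1 + t := by linarith
  have ht3 : (0:ℝ) < 1 + t ^ 2 := by positivity
  have e1 : HasDerivAt (fun x : ℝ => 1 - x) (-1) t := by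
    simpa using (hasDerivAt_id t).const_sub 1
  have e2 : HasDerivAt (fun x : ℝ => 1 + x) 1 t := by
    simpa using (hasDerivAt_id t).const_add 1
  have e3 : HasDerivAt (fun x : ℝ => 1 + x ^ 2) (2 * t) t := by
    simpa using (hasDerivAt_pow 2 t).const_add 1
  have l1 : HasDerivAt (fun x : ℝ => Real.log (1 - x)) (-1 / (1 - t)) t :=
    e1.log ht1.ne'
  have l2 : HasDerivAt (fun x : ℝ => Real.log (1 + x)) (1 / (1 + t)) t :=
    e2.log ht2.ne'
  have l3 : HasDerivAt (fun x : ℝ => Real.log (1 + x ^ 2)) (2 * t / (1 + t ^ 2)) t :=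
    e3.log ht3.ne'
  have p1 : HasDerivAt (fun x : ℝ => (1 - x) ^ 2 * Real.log (1 - x))
      ((2 * (1 - t) ^ 1 * (-1)) * Real.log (1 - t) + (1 - t) ^ 2 * (-1 / (1 - t))) t :=
    (e1.pow 2).mul l1
  have p2 : HasDerivAt (fun x : ℝ => (1 + x) ^ 2 * Real.log (1 + x))
      ((2 * (1 + t) ^ 1 * 1) * Real.log (1 + t) + (1 + t) ^ 2 * (1 / (1 + t))) t :=
    (e2.pow 2).mul l2
  have p3 : HasDerivAt (fun x : ℝ => (1 + x ^ 2) * Real.log (1 + x ^ 2))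
      (2 * t * Real.log (1 + t ^ 2) + (1 + t ^ 2) * (2 * t / (1 + t ^ 2))) t :=
    e3.mul l3
  have total := (p1.add p2).sub p3
  have hfe : hFun = fun x : ℝ => (1 - x) ^ 2 * Real.log (1 - x)
      + (1 + x) ^ 2 * Real.log (1 + x) - (1 + x ^ 2) * Real.log (1 + x ^ 2) :=
    funext hFun_eq
  rw [hfe]
  refine total.congr_deriv ?_
  unfold hFun'
  field_simp
  ring

lemma hFun'_nonneg {t : ℝ} (h0 : 0 ≤ t) (h1 : t < 1) : 0 ≤ hFun' t := by
  have ht1 : (0:ℝ) ≤ 1 - t := by linarith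
  have ht3 : (0:ℝ) < 1 + t ^ 2 := by positivity
  have la : 0 ≤ Real.log (1 + t) := Real.log_nonneg (by linarith)
  have lb : Real.log (1 - t) ≤ 0 := Real.log_nonpos (by linarith) (by linarith)
  have lc : 0 ≤ Real.log (1 + t ^ 2) := Real.log_nonneg (by nlinarith)
  have lab : Real.log (1 + t ^ 2) ≤ Real.log (1 + t) :=
    Real.log_le_log ht3 (by nlinarith)
  unfold hFun'
  nlinarith [mul_nonneg h0 lc, mul_le_mul_of_nonneg_left lab (show (0:ℝ) ≤ 1 + t by linarith),
    mul_nonpos_of_nonneg_of_nonpos ht1 lb]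

lemma hFun_zero : hFun 0 = 0 := by
  simp [hFun_eq]

/-- For every `t ∈ [0,1)`, `h'(t) ≥ h(t) ≥ 0`. -/
theorem hFun'_ge_hFun_ge_zero :
    ∀ t ∈ Set.Ico (0 : ℝ) 1, hFun' t ≥ hFun t ∧ hFun t ≥ 0 := by
  have mono : MonotoneOn hFun (Set.Ico (0:ℝ) 1) := by
    apply monotoneOn_of_deriv_nonneg (convex_Ico 0 1)
    · intro x hx
      exact (hFun_hasDerivAt (by linarith [hx.1]) hx.2).continuousAt.continuousWithinAt
    · rw [interior_Ico]
      intro x hx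
      exact (hFun_hasDerivAt (by linarith [hx.1]) hx.2).differentiableAt.differentiableWithinAt
    · rw [interior_Ico]
      intro x hx
      rw [(hFun_hasDerivAt (by linarith [hx.1]) hx.2).deriv]
      exact hFun'_nonneg hx.1.le hx.2
  intro t ht
  obtain ⟨h0, h1⟩ := ht
  have hnn : hFun t ≥ 0 := by
    have := mono (Set.mem_Ico.mpr ⟨le_refl 0, by norm_num⟩) (Set.mem_Ico.mpr ⟨h0, h1⟩) h0
    rwa [hFun_zero] at this
  refine ⟨?_, hnn⟩
  -- h'(t) - h(t) = (1-t)[(1+t)log(1+t) - (3-t)log(1-t) + (1-t)log(1+t²)] ≥ 0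
  have ht1 : (0:ℝ) ≤ 1 - t := by linarith
  have la : 0 ≤ Real.log (1 + t) := Real.log_nonneg (by linarith)
  have lb : Real.log (1 - t) ≤ 0 := Real.log_nonpos (by linarith) (by linarith)
  have lc : 0 ≤ Real.log (1 + t ^ 2) := Real.log_nonneg (by nlinarith)
  rw [ge_iff_le, hFun_eq]
  unfold hFun'
  nlinarith [mul_nonneg (mul_nonneg ht1 (show (0:ℝ) ≤ 1 + t by linarith)) la,
    mul_nonneg (mul_nonneg ht1 (show (0:ℝ) ≤ 3 - t by linarith)) (neg_nonneg.mpr lb),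
    mul_nonneg (mul_nonneg ht1 ht1) lc]
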